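/- Let v ∈ (0,1) and let G be a positive random variable. Define α* = sup{ z ≥ 0 : v·E[G^z] < 1 } (possibly ∞). If Y = ∏_{t=1}^T G_t with (G_t) i.i.d. copies of G independent of a geometric T with Pr(T=k) = (1−v)v^k, then E[Y^z] < ∞ for all 0 ≤ z < α* and E[Y^z] = ∞ for all z > α* with v·E[G^z] > 1. -/

import Mathlib

open MeasureTheory ProbabilityTheory ENNReal

/-- Moment boundary of the geometrically stopped random product (Beare–Toda):
let `φ z = v * E[G^z]` (with values in `[0,∞]`) and
`α* = ⨆ {z ≥ 0 : φ z < 1}` (in `[0,∞]`). If `Y = ∏_{t=1}^T Gₜ` with `(Gₜ)` i.i.d.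
copies of `G = G 1`, independent of a geometric `T` with `Pr(T = k) = (1-v) v^k`,
then `E[Y^z] < ∞` for all `0 ≤ z < α*`, and `E[Y^z] = ∞` for all `z > α*` with
`φ z > 1`. -/
theorem stmt_11 {Ω : Type*} [MeasurableSpace Ω] (μ : Measure Ω) [IsProbabilityMeasure μ]
    (v : ℝ) (hv : v ∈ Set.Ioo (0 : ℝ) 1)
    (G : ℕ → Ω → ℝ) (hGm : ∀ t, Measurable (G t)) (hGpos : ∀ t ω, 0 < G t ω)
    (hiid : iIndepFun G μ)
    (hident : ∀ t, IdentDistrib (G t) (G 1) μ μ)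
    (T : Ω → ℕ) (hTm : Measurable T)
    (hT : ∀ k : ℕ, μ {ω | T ω = k} = ENNReal.ofReal ((1 - v) * v ^ k))
    (hTindep : IndepFun T (fun ω => fun t => G t ω) μ)
    (φ : ℝ → ℝ≥0∞)
    (hφ : ∀ z, φ z = ENNReal.ofReal v * ∫⁻ ω, ENNReal.ofReal (G 1 ω ^ z) ∂μ)
    (αstar : ℝ≥0∞) (hαstar : αstar = ⨆ z ∈ {z : ℝ | 0 ≤ z ∧ φ z < 1}, ENNReal.ofReal z)
    (Y : Ω → ℝ) (hY : ∀ ω, Y ω = ∏ t ∈ Finset.range (T ω), G (t + 1) ω) :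
    (∀ z : ℝ, 0 ≤ z → ENNReal.ofReal z < αstar →
      ∫⁻ ω, ENNReal.ofReal (Y ω ^ z) ∂μ < ⊤) ∧
    (∀ z : ℝ, αstar < ENNReal.ofReal z → 1 < φ z →
      ∫⁻ ω, ENNReal.ofReal (Y ω ^ z) ∂μ = ⊤) := by
  obtain ⟨hv0, hv1⟩ := hv
  have hpowm : ∀ z : ℝ, Measurable fun x : ℝ => ENNReal.ofReal (x ^ z) := fun z =>
    ENNReal.measurable_ofReal.comp (measurable_id.pow measurable_const)
  -- The key computation: E[Y^z] = (1-v) ∑ₖ (φ z)^k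
  have key : ∀ z : ℝ, ∫⁻ ω, ENNReal.ofReal (Y ω ^ z) ∂μ
      = ENNReal.ofReal (1 - v) * ∑' k : ℕ, (φ z) ^ k := by
    intro z
    set m := ∫⁻ ω, ENNReal.ofReal (G 1 ω ^ z) ∂μ with hm
    set H : ℕ → Ω → ℝ≥0∞ := fun t ω => ENNReal.ofReal (G t ω ^ z) with hH
    have hHm : ∀ t, Measurable (H t) := fun t => (hpowm z).comp (hGm t)
    have hHindep : iIndepFun H μ :=
      hiid.comp (fun _ x => ENNReal.ofReal (x ^ z)) (fun _ => hpowm z)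
    have hHint : ∀ t, ∫⁻ ω, H t ω ∂μ = m := fun t =>
      ((hident t).comp (hpowm z)).lintegral_eq
    have hprodm : ∀ k : ℕ, Measurable fun ω => ∏ t ∈ Finset.range k, H (t + 1) ω :=
      fun k => Finset.measurable_prod _ (fun t _ => hHm (t + 1))
    have prodint : ∀ k : ℕ, ∫⁻ ω, ∏ t ∈ Finset.range k, H (t + 1) ω ∂μ = m ^ k := by
      intro k
      induction k with
      | zero => simp
      | succ k ih =>
        have hne : k + 1 ∉ (Finset.range k).image (· + 1) := by
          simp
        have hind : IndepFun (∏ j ∈ (Finset.range k).image (· + 1), H j) (H (k + 1)) μ :=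
          hHindep.indepFun_finsetProd_of_notMem hHm hne
        have hprodeq : (∏ j ∈ (Finset.range k).image (· + 1), H j)
            = fun ω => ∏ t ∈ Finset.range k, H (t + 1) ω := by
          funext ω
          rw [Finset.prod_apply]
          exact Finset.prod_image (fun a _ b _ h => by omega)
        rw [hprodeq] at hind
        calc ∫⁻ ω, ∏ t ∈ Finset.range (k + 1), H (t + 1) ω ∂μ
            = ∫⁻ ω, (∏ t ∈ Finset.range k, H (t + 1) ω) * H (k + 1) ω ∂μ := by
              simp_rw [Finset.prod_range_succ]
          _ = (∫⁻ ω, ∏ t ∈ Finset.range k, H (t + 1) ω ∂μ) * ∫⁻ ω, H (k + 1) ω ∂μ :=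
              lintegral_mul_eq_lintegral_mul_lintegral_of_indepFun''
                (hprodm k).aemeasurable (hHm (k + 1)).aemeasurable hind
          _ = m ^ k * m := by rw [ih, hHint (k + 1)]
          _ = m ^ (k + 1) := (pow_succ m k).symm
    set P : ℕ → Ω → ℝ≥0∞ :=
      fun k ω => ENNReal.ofReal ((∏ t ∈ Finset.range k, G (t + 1) ω) ^ z) with hP
    have hPH : ∀ k ω, P k ω = ∏ t ∈ Finset.range k, H (t + 1) ω := by
      intro k ω
      rw [hP]
      simp only
      rw [← Real.finset_prod_rpow _ _ (fun i _ => (hGpos _ ω).le) z,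
        ENNReal.ofReal_prod_of_nonneg (fun i _ => Real.rpow_nonneg (hGpos _ ω).le z)]
    have hPm : ∀ k, Measurable (P k) := by
      intro k
      have : P k = fun ω => ∏ t ∈ Finset.range k, H (t + 1) ω := funext (hPH k)
      rw [this]
      exact hprodm k
    have hsplit : ∀ ω, ENNReal.ofReal (Y ω ^ z)
        = ∑' k : ℕ, Set.indicator {ω' | T ω' = k} (P k) ω := by
      intro ω
      rw [tsum_eq_single (T ω) (fun k hk => Set.indicator_of_notMem (fun h => hk h.symm) _)]
      rw [Set.indicator_of_mem (show ω ∈ {ω' | T ω' = T ω} from rfl), hP]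
      simp only [hY]
    have hTk : ∀ k : ℕ, MeasurableSet {ω | T ω = k} :=
      fun k => hTm (measurableSet_singleton k)
    calc ∫⁻ ω, ENNReal.ofReal (Y ω ^ z) ∂μ
        = ∫⁻ ω, ∑' k : ℕ, Set.indicator {ω' | T ω' = k} (P k) ω ∂μ := lintegral_congr hsplit
      _ = ∑' k : ℕ, ∫⁻ ω, Set.indicator {ω' | T ω' = k} (P k) ω ∂μ :=
          lintegral_tsum (fun k => ((hPm k).indicator (hTk k)).aemeasurable)
      _ = ∑' k : ℕ, μ {ω | T ω = k} * m ^ k := by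
          refine tsum_congr fun k => ?_
          set Fk : (ℕ → ℝ) → ℝ≥0∞ :=
            fun x => ENNReal.ofReal ((∏ t ∈ Finset.range k, x (t + 1)) ^ z) with hFk
          have hFkm : Measurable Fk :=
            ENNReal.measurable_ofReal.comp
              ((Finset.measurable_prod _ (fun t _ => measurable_pi_apply (t + 1))).pow
                measurable_const)
          have hindicm : Measurable (Set.indicator ({k} : Set ℕ) (fun _ => (1 : ℝ≥0∞))) :=
            measurable_const.indicator (measurableSet_singleton k)
          have hrw : ∀ ω, Set.indicator {ω' | T ω' = k} (P k) ω
              = Set.indicator ({k} : Set ℕ) (fun _ => (1 : ℝ≥0∞)) (T ω)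
                * Fk (fun t => G t ω) := by
            intro ω
            by_cases h : T ω = k
            · simp only [Set.indicator_apply, Set.mem_setOf_eq, Set.mem_singleton_iff, h,
                if_true, one_mul]
              rfl
            · simp only [Set.indicator_apply, Set.mem_setOf_eq, Set.mem_singleton_iff, h,
                if_false, zero_mul]
          have hindep2 : IndepFun
              (fun ω => Set.indicator ({k} : Set ℕ) (fun _ => (1 : ℝ≥0∞)) (T ω))
              (fun ω => Fk (fun t => G t ω)) μ :=
            hTindep.comp hindicm hFkm
          have hmul := lintegral_mul_eq_lintegral_mul_lintegral_of_indepFun''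
              (μ := μ)
              (f := fun ω => Set.indicator ({k} : Set ℕ) (fun _ => (1 : ℝ≥0∞)) (T ω))
              (g := fun ω => Fk (fun t => G t ω))
              ((hindicm.comp hTm).aemeasurable)
              ((hFkm.comp (measurable_pi_lambda _ (fun t => hGm t))).aemeasurable) hindep2
          rw [lintegral_congr hrw, hmul]
          congr 1
          · have : (fun ω => Set.indicator ({k} : Set ℕ) (fun _ => (1 : ℝ≥0∞)) (T ω))
                = Set.indicator {ω | T ω = k} (fun _ => (1 : ℝ≥0∞)) := by
              funext ω
              simp only [Set.indicator_apply, Set.mem_setOf_eq, Set.mem_singleton_iff]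
            rw [this]
            exact lintegral_indicator_one (hTk k)
          · have : (fun ω => Fk (fun t => G t ω)) = fun ω => ∏ t ∈ Finset.range k, H (t + 1) ω := by
              funext ω
              exact hPH k ω
            rw [this]
            exact prodint k
      _ = ∑' k : ℕ, ENNReal.ofReal (1 - v) * (φ z) ^ k := by
          refine tsum_congr fun k => ?_
          rw [hT k, hφ z, ENNReal.ofReal_mul (by linarith : (0:ℝ) ≤ 1 - v),
            ENNReal.ofReal_pow hv0.le, mul_pow]
          ring
      _ = ENNReal.ofReal (1 - v) * ∑' k : ℕ, (φ z) ^ k := ENNReal.tsum_mul_left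
  constructor
  · intro z hz hlt
    rw [hαstar] at hlt
    simp only [lt_iSup_iff] at hlt
    obtain ⟨z', ⟨hz'0, hφz'⟩, hzz'⟩ := hlt
    have hz'pos : 0 < z' := by
      by_contra h
      push_neg at h
      rw [ENNReal.ofReal_eq_zero.2 h] at hzz'
      exact (not_lt_of_ge zero_le) hzz'
    have hzz : z < z' := (ENNReal.ofReal_lt_ofReal_iff hz'pos).1 hzz'
    set l := z / z' with hl
    have hl0 : 0 ≤ l := div_nonneg hz hz'pos.le
    have hl1 : l < 1 := (div_lt_one hz'pos).2 hzz
    have hlz : l * z' = z := div_mul_cancel₀ z hz'pos.ne'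
    have hpoint : ∀ ω, G 1 ω ^ z ≤ (1 - l) + l * G 1 ω ^ z' := by
      intro ω
      have hx := hGpos 1 ω
      rw [Real.rpow_def_of_pos hx, Real.rpow_def_of_pos hx]
      have hconv := convexOn_exp.2 (Set.mem_univ (0 : ℝ))
        (Set.mem_univ (z' * Real.log (G 1 ω)))
        (by linarith : (0:ℝ) ≤ 1 - l) hl0 (by ring)
      simp only [smul_eq_mul, mul_zero, zero_add, Real.exp_zero, mul_one] at hconv
      have harg : Real.log (G 1 ω) * z = l * (z' * Real.log (G 1 ω)) := by
        rw [← hlz]; ring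
      rw [harg, mul_comm (Real.log (G 1 ω)) z']
      linarith [hconv]
    have hφlt : φ z < 1 := by
      have hmono : ∫⁻ ω, ENNReal.ofReal (G 1 ω ^ z) ∂μ
          ≤ ENNReal.ofReal (1 - l) + ENNReal.ofReal l * ∫⁻ ω, ENNReal.ofReal (G 1 ω ^ z') ∂μ := by
        calc ∫⁻ ω, ENNReal.ofReal (G 1 ω ^ z) ∂μ
            ≤ ∫⁻ ω, (ENNReal.ofReal (1 - l)
                + ENNReal.ofReal l * ENNReal.ofReal (G 1 ω ^ z')) ∂μ := by
              refine lintegral_mono fun ω => ?_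
              calc ENNReal.ofReal (G 1 ω ^ z)
                  ≤ ENNReal.ofReal ((1 - l) + l * G 1 ω ^ z') :=
                    ENNReal.ofReal_le_ofReal (hpoint ω)
                _ = _ := by
                    rw [ENNReal.ofReal_add (by linarith)
                      (mul_nonneg hl0 (Real.rpow_nonneg (hGpos 1 ω).le _)),
                      ENNReal.ofReal_mul hl0]
          _ = _ := by
              rw [lintegral_add_left measurable_const,
                lintegral_const_mul (ENNReal.ofReal l)
                  (show Measurable fun ω => ENNReal.ofReal (G 1 ω ^ z') from
                    (hpowm z').comp (hGm 1)),
                lintegral_const, measure_univ, mul_one]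
      rw [hφ z]
      calc ENNReal.ofReal v * ∫⁻ ω, ENNReal.ofReal (G 1 ω ^ z) ∂μ
          ≤ ENNReal.ofReal v * (ENNReal.ofReal (1 - l)
              + ENNReal.ofReal l * ∫⁻ ω, ENNReal.ofReal (G 1 ω ^ z') ∂μ) :=
            mul_le_mul_right hmono _
        _ = ENNReal.ofReal v * ENNReal.ofReal (1 - l) + ENNReal.ofReal l * φ z' := by
            rw [mul_add, hφ z']; ring
        _ < 1 := by
            have h1 : ENNReal.ofReal v * ENNReal.ofReal (1 - l) < ENNReal.ofReal (1 - l) := by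
              rw [← ENNReal.ofReal_mul hv0.le]
              exact (ENNReal.ofReal_lt_ofReal_iff (by linarith)).2 (by nlinarith)
            have h2 : ENNReal.ofReal l * φ z' ≤ ENNReal.ofReal l := by
              calc ENNReal.ofReal l * φ z' ≤ ENNReal.ofReal l * 1 :=
                    mul_le_mul_right hφz'.le _
                _ = ENNReal.ofReal l := mul_one _
            calc ENNReal.ofReal v * ENNReal.ofReal (1 - l) + ENNReal.ofReal l * φ z'
                < ENNReal.ofReal (1 - l) + ENNReal.ofReal l :=
                  ENNReal.add_lt_add_of_lt_of_le
                    (ne_top_of_le_ne_top ENNReal.ofReal_ne_top h2) h1 h2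
              _ = 1 := by
                  rw [← ENNReal.ofReal_add (by linarith) hl0, sub_add_cancel,
                    ENNReal.ofReal_one]
    rw [key z, ENNReal.tsum_geometric]
    exact ENNReal.mul_lt_top ENNReal.ofReal_lt_top
      (ENNReal.inv_lt_top.2 (tsub_pos_of_lt hφlt))
  · intro z _ hφz
    rw [key z, ENNReal.tsum_geometric, tsub_eq_zero_of_le hφz.le, ENNReal.inv_zero,
      ENNReal.mul_top (by simp only [ne_eq, ENNReal.ofReal_eq_zero, not_le]; linarith)]
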